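/- Suppose there is a perfect coloring of the Doob graph D(m,n) with quotient matrix S. Then: (1) for any even positive integer k and any nonnegative integers m', n' with 2m' + n' = kn, there is a perfect coloring of D(mk + m', n') with quotient matrix k·S; (2) for any odd positive integer k and any nonnegative integers m', n' with 2m' + n' = kn and n' ≥ n, there is a perfect coloring of D(mk + m', n') with quotient matrix k·S. -/

import Mathlib

open SimpleGraph

/-- The Shrikhande graph: Cayley graph on `ZMod 4 × ZMod 4` with connection set
`{(0,1),(0,3),(1,0),(3,0),(1,1),(3,3)}`. -/
def shrikhande : SimpleGraph (ZMod 4 × ZMod 4) :=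
  SimpleGraph.fromRel (fun x y =>
    x - y ∈ ({(0, 1), (0, 3), (1, 0), (3, 0), (1, 1), (3, 3)} : Set (ZMod 4 × ZMod 4)))

/-- Vertices of the Doob graph `D(m,n)`. -/
abbrev DoobVertex (m n : ℕ) := (Fin m → ZMod 4 × ZMod 4) × (Fin n → ZMod 4)

/-- The Doob graph `D(m,n)`: the Cartesian (box) product of `m` copies of the
Shrikhande graph and `n` copies of the complete graph `K₄`. Two vertices are
adjacent iff they differ in exactly one coordinate and are adjacent in the
corresponding factor. -/
def doobGraph (m n : ℕ) : SimpleGraph (DoobVertex m n) :=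
  SimpleGraph.fromRel (fun x y =>
    (∃ i, shrikhande.Adj (x.1 i) (y.1 i) ∧ (∀ j, j ≠ i → x.1 j = y.1 j) ∧ x.2 = y.2) ∨
    (∃ i, x.2 i ≠ y.2 i ∧ (∀ j, j ≠ i → x.2 j = y.2 j) ∧ x.1 = y.1))

/-- `f` is a perfect coloring of `G` with quotient matrix `S`: `f` is surjective and
every vertex of color `i` has exactly `S i j` neighbors of color `j`. -/
def IsPerfectColoring {V C : Type*} (G : SimpleGraph V) (f : V → C)
    (S : Matrix C C ℕ) : Prop :=
  Function.Surjective f ∧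
    ∀ x c, {y | G.Adj x y ∧ f y = c}.ncard = S (f x) c

namespace DoobAux

/-- The connection set as a Finset. -/
def csF : Finset (ZMod 4 × ZMod 4) := {(0,1),(0,3),(1,0),(3,0),(1,1),(3,3)}

def φ4 (s : ZMod 4 × ZMod 4) : ZMod 4 := s.1 + s.2

lemma csF_facts : ∀ s ∈ csF, -s ∈ csF ∧ s ≠ 0 ∧ φ4 s ≠ 0 := by decide

lemma count2 : ∀ δ : ZMod 4, δ ≠ 0 → (csF.filter (fun s => φ4 s = δ)).card = 2 := by decide

lemma shrik_adj (u v : ZMod 4 × ZMod 4) : shrikhande.Adj u v ↔ u - v ∈ csF := by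
  rw [shrikhande, SimpleGraph.fromRel_adj]
  have hmem : ∀ w : ZMod 4 × ZMod 4,
      w ∈ ({(0, 1), (0, 3), (1, 0), (3, 0), (1, 1), (3, 3)} : Set (ZMod 4 × ZMod 4)) ↔
      w ∈ csF := by
    intro w
    simp [csF, Set.mem_insert_iff]
  constructor
  · rintro ⟨hne, h | h⟩
    · exact (hmem _).1 h
    · have h' : v - u ∈ csF := (hmem _).1 h
      have := (csF_facts _ h').1
      simpa [neg_sub] using this
  · intro h
    refine ⟨?_, Or.inl ((hmem _).2 h)⟩
    intro he
    rw [he] at h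
    simp only [sub_self] at h
    exact (csF_facts _ h).2.1 rfl

variable {M N m n : ℕ}

def mvS (M N : ℕ) (i : Fin M) (s : ZMod 4 × ZMod 4) : DoobVertex M N := (Pi.single i s, 0)

def mvK (M N : ℕ) (j : Fin N) (δ : ZMod 4) : DoobVertex M N := (0, Pi.single j δ)

def isMove (M N : ℕ) (e : DoobVertex M N) : Prop :=
  (∃ i s, s ∈ csF ∧ e = mvS M N i s) ∨ (∃ j δ, δ ≠ 0 ∧ e = mvK M N j δ)

lemma single_inj {ι G : Type*} [DecidableEq ι] [Zero G] {a b : ι} {x y : G}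
    (hx : x ≠ 0) (h : Pi.single a x = (Pi.single b y : ι → G)) : a = b ∧ x = y := by
  have ha := congrFun h a
  rw [Pi.single_eq_same, Pi.single_apply] at ha
  by_cases hab : a = b
  · subst hab
    simp only [if_pos rfl] at ha
    exact ⟨rfl, ha⟩
  · rw [if_neg hab] at ha
    exact absurd ha hx

lemma doob_adj (x y : DoobVertex M N) :
    (doobGraph M N).Adj x y ↔ isMove M N (x - y) := by
  rw [doobGraph, SimpleGraph.fromRel_adj]
  constructor
  · rintro ⟨hne, h | h⟩
    · rcases h with ⟨i, hadj, hrest, h2⟩ | ⟨j, hne', hrest, h1⟩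
      · refine Or.inl ⟨i, x.1 i - y.1 i, (shrik_adj _ _).1 hadj, ?_⟩
        refine Prod.ext (funext fun j => ?_) ?_
        · show x.1 j - y.1 j = (Pi.single i (x.1 i - y.1 i) : Fin M → ZMod 4 × ZMod 4) j
          rw [Pi.single_apply]
          by_cases hj : j = i
          · subst hj; rw [if_pos rfl]
          · rw [if_neg hj, hrest j hj, sub_self]
        · show x.2 - y.2 = 0
          rw [h2, sub_self]
      · refine Or.inr ⟨j, x.2 j - y.2 j, sub_ne_zero_of_ne hne', ?_⟩
        refine Prod.ext ?_ (funext fun l => ?_)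
        · show x.1 - y.1 = 0
          rw [h1, sub_self]
        · show x.2 l - y.2 l = (Pi.single j (x.2 j - y.2 j) : Fin N → ZMod 4) l
          rw [Pi.single_apply]
          by_cases hl : l = j
          · subst hl; rw [if_pos rfl]
          · rw [if_neg hl, hrest l hl, sub_self]
    · rcases h with ⟨i, hadj, hrest, h2⟩ | ⟨j, hne', hrest, h1⟩
      · refine Or.inl ⟨i, x.1 i - y.1 i, ?_, ?_⟩
        · exact (shrik_adj _ _).1 hadj.symm
        · refine Prod.ext (funext fun j => ?_) ?_
          · show x.1 j - y.1 j = (Pi.single i (x.1 i - y.1 i) : Fin M → ZMod 4 × ZMod 4) j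
            rw [Pi.single_apply]
            by_cases hj : j = i
            · subst hj; rw [if_pos rfl]
            · rw [if_neg hj, (hrest j hj).symm, sub_self]
          · show x.2 - y.2 = 0
            rw [h2.symm, sub_self]
      · refine Or.inr ⟨j, x.2 j - y.2 j, sub_ne_zero_of_ne (Ne.symm hne'), ?_⟩
        refine Prod.ext ?_ (funext fun l => ?_)
        · show x.1 - y.1 = 0
          rw [h1.symm, sub_self]
        · show x.2 l - y.2 l = (Pi.single j (x.2 j - y.2 j) : Fin N → ZMod 4) l
          rw [Pi.single_apply]
          by_cases hl : l = j
          · subst hl; rw [if_pos rfl]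
          · rw [if_neg hl, (hrest l hl).symm, sub_self]
  · intro h
    rcases h with ⟨i, s, hs, he⟩ | ⟨j, δ, hδ, he⟩
    · have h1 : x.1 - y.1 = Pi.single i s := congrArg Prod.fst he
      have h2 : x.2 - y.2 = 0 := congrArg Prod.snd he
      have hii : x.1 i - y.1 i = s := by
        have := congrFun h1 i; rwa [Pi.single_eq_same] at this
      refine ⟨?_, Or.inl (Or.inl ⟨i, ?_, fun j hj => ?_, ?_⟩)⟩
      · intro hxy
        rw [hxy, sub_self] at hii
        exact (csF_facts _ hs).2.1 hii.symm
      · rw [shrik_adj, hii]; exact hs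
      · have := congrFun h1 j
        rw [Pi.single_apply, if_neg hj] at this
        exact sub_eq_zero.1 this
      · exact sub_eq_zero.1 h2
    · have h1 : x.1 - y.1 = 0 := congrArg Prod.fst he
      have h2 : x.2 - y.2 = Pi.single j δ := congrArg Prod.snd he
      have hjj : x.2 j - y.2 j = δ := by
        have := congrFun h2 j; rwa [Pi.single_eq_same] at this
      refine ⟨?_, Or.inl (Or.inr ⟨j, ?_, fun l hl => ?_, ?_⟩)⟩
      · intro hxy
        rw [hxy, sub_self] at hjj
        exact hδ hjj.symm
      · intro hxx
        rw [sub_eq_zero.2 hxx] at hjj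
        exact hδ hjj.symm
      · have := congrFun h2 l
        rw [Pi.single_apply, if_neg hl] at this
        exact sub_eq_zero.1 this
      · exact sub_eq_zero.1 h1

end DoobAux

namespace DoobAux

variable {M N m n : ℕ}

def fbS (P : Fin M → Fin m ⊕ Fin n) (t : Fin m) : Finset (Fin M) :=
  Finset.univ.filter (fun i => P i = Sum.inl t)

def fbX (P : Fin M → Fin m ⊕ Fin n) (t : Fin n) : Finset (Fin M) :=
  Finset.univ.filter (fun i => P i = Sum.inr t)

def fbQ (Q : Fin N → Fin n) (t : Fin n) : Finset (Fin N) :=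
  Finset.univ.filter (fun j => Q j = t)

def psiFun (P : Fin M → Fin m ⊕ Fin n) (Q : Fin N → Fin n) (x : DoobVertex M N) :
    DoobVertex m n :=
  (fun t => ∑ i ∈ fbS P t, x.1 i,
   fun t => (∑ i ∈ fbX P t, φ4 (x.1 i)) + ∑ j ∈ fbQ Q t, x.2 j)

def psi (P : Fin M → Fin m ⊕ Fin n) (Q : Fin N → Fin n) :
    DoobVertex M N →+ DoobVertex m n where
  toFun := psiFun P Q
  map_zero' := by
    unfold psiFun
    refine Prod.ext (funext fun t => ?_) (funext fun t => ?_) <;>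
      simp [φ4]
  map_add' x y := by
    unfold psiFun
    refine Prod.ext (funext fun t => ?_) (funext fun t => ?_)
    · show ∑ i ∈ fbS P t, (x + y).1 i = (∑ i ∈ fbS P t, x.1 i) + ∑ i ∈ fbS P t, y.1 i
      simp [Finset.sum_add_distrib]
    · show (∑ i ∈ fbX P t, φ4 ((x + y).1 i)) + ∑ j ∈ fbQ Q t, (x + y).2 j
        = ((∑ i ∈ fbX P t, φ4 (x.1 i)) + ∑ j ∈ fbQ Q t, x.2 j)
          + ((∑ i ∈ fbX P t, φ4 (y.1 i)) + ∑ j ∈ fbQ Q t, y.2 j)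
      have : ∀ i, φ4 ((x + y).1 i) = φ4 (x.1 i) + φ4 (y.1 i) := by
        intro i; simp [φ4]; ring
      have h2 : ∀ j, (x + y).2 j = x.2 j + y.2 j := fun j => rfl
      simp only [this, h2, Finset.sum_add_distrib]
      ring

lemma psiFun_sub (P : Fin M → Fin m ⊕ Fin n) (Q : Fin N → Fin n) (x y : DoobVertex M N) :
    psiFun P Q (x - y) = psiFun P Q x - psiFun P Q y :=
  (psi P Q).map_sub x y

variable {P : Fin M → Fin m ⊕ Fin n} {Q : Fin N → Fin n}

lemma psi_mvS_inl {i : Fin M} {t : Fin m} (h : P i = Sum.inl t) (s : ZMod 4 × ZMod 4) :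
    psiFun P Q (mvS M N i s) = mvS m n t s := by
  unfold psiFun mvS
  refine Prod.ext (funext fun t' => ?_) (funext fun t' => ?_)
  · show (∑ i' ∈ fbS P t', Pi.single i s i') = (Pi.single t s : Fin m → ZMod 4 × ZMod 4) t'
    rw [Finset.sum_pi_single', Pi.single_apply]
    simp only [fbS, Finset.mem_filter, Finset.mem_univ, true_and, h]
    by_cases ht : t' = t
    · subst ht; simp
    · rw [if_neg ht, if_neg (by simpa [eq_comm, Sum.inl.injEq] using ht)]
  · show (∑ i' ∈ fbX P t', φ4 ((Pi.single i s : Fin M → ZMod 4 × ZMod 4) i'))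
        + ∑ j ∈ fbQ Q t', (0 : Fin N → ZMod 4) j
      = (0 : Fin n → ZMod 4) t'
    have h1 : ∀ i' ∈ fbX P t', φ4 ((Pi.single i s : Fin M → ZMod 4 × ZMod 4) i') = 0 := by
      intro i' hi'
      simp only [fbX, Finset.mem_filter, Finset.mem_univ, true_and] at hi'
      have : i' ≠ i := by rintro rfl; rw [h] at hi'; exact Sum.inl_ne_inr hi'
      rw [Pi.single_apply, if_neg this]
      simp [φ4]
    rw [Finset.sum_congr rfl h1]
    simp

lemma psi_mvS_inr {i : Fin M} {t : Fin n} (h : P i = Sum.inr t) (s : ZMod 4 × ZMod 4) :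
    psiFun P Q (mvS M N i s) = mvK m n t (φ4 s) := by
  unfold psiFun mvS mvK
  refine Prod.ext (funext fun t' => ?_) (funext fun t' => ?_)
  · show (∑ i' ∈ fbS P t', Pi.single i s i') = (0 : Fin m → ZMod 4 × ZMod 4) t'
    rw [Finset.sum_pi_single']
    simp only [fbS, Finset.mem_filter, Finset.mem_univ, true_and, h]
    rw [if_neg (by simp)]
    rfl
  · show (∑ i' ∈ fbX P t', φ4 ((Pi.single i s : Fin M → ZMod 4 × ZMod 4) i'))
        + ∑ j ∈ fbQ Q t', (0 : Fin N → ZMod 4) j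
      = (Pi.single t (φ4 s) : Fin n → ZMod 4) t'
    have h1 : ∀ i', φ4 ((Pi.single i s : Fin M → ZMod 4 × ZMod 4) i')
        = (Pi.single i (φ4 s) : Fin M → ZMod 4) i' := by
      intro i'
      rw [Pi.single_apply, Pi.single_apply, apply_ite φ4]
      simp [φ4]
    rw [Finset.sum_congr rfl (fun i' _ => h1 i'), Finset.sum_pi_single', Pi.single_apply]
    simp only [fbX, Finset.mem_filter, Finset.mem_univ, true_and, h]
    by_cases ht : t' = t
    · subst ht; simp
    · rw [if_neg (by simpa [eq_comm, Sum.inr.injEq] using ht), if_neg ht]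
      simp

lemma psi_mvK (j : Fin N) (δ : ZMod 4) :
    psiFun P Q (mvK M N j δ) = mvK m n (Q j) δ := by
  unfold psiFun mvK
  refine Prod.ext (funext fun t' => ?_) (funext fun t' => ?_)
  · simp
  · show (∑ i' ∈ fbX P t', φ4 ((0 : Fin M → ZMod 4 × ZMod 4) i'))
        + ∑ j' ∈ fbQ Q t', Pi.single j δ j'
      = (Pi.single (Q j) δ : Fin n → ZMod 4) t'
    rw [Finset.sum_pi_single', Pi.single_apply]
    simp only [fbQ, Finset.mem_filter, Finset.mem_univ, true_and]
    have : (∑ i' ∈ fbX P t', φ4 ((0 : Fin M → ZMod 4 × ZMod 4) i')) = 0 := by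
      simp [φ4]
    rw [this, zero_add]
    by_cases ht : Q j = t'
    · rw [if_pos ht, if_pos ht.symm]
    · rw [if_neg ht, if_neg (Ne.symm ht)]

end DoobAux

namespace DoobAux

variable {M N m n : ℕ} {P : Fin M → Fin m ⊕ Fin n} {Q : Fin N → Fin n} {k : ℕ}

lemma move_shape (e : DoobVertex M N) (he : isMove M N e) :
    isMove m n (psiFun P Q e) := by
  rcases he with ⟨i, s, hs, rfl⟩ | ⟨j, δ, hδ, rfl⟩
  · rcases hPi : P i with t | t
    · rw [psi_mvS_inl hPi]
      exact Or.inl ⟨t, s, hs, rfl⟩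
    · rw [psi_mvS_inr hPi]
      exact Or.inr ⟨t, φ4 s, (csF_facts _ hs).2.2, rfl⟩
  · rw [psi_mvK]
    exact Or.inr ⟨Q j, δ, hδ, rfl⟩

lemma mvS_fst (i : Fin M) (s : ZMod 4 × ZMod 4) :
    (mvS M N i s).1 = Pi.single i s := rfl

lemma mvK_fst (j : Fin N) (δ : ZMod 4) : (mvK M N j δ).1 = 0 := rfl

lemma mvS_eq_iff {i i' : Fin M} {s s' : ZMod 4 × ZMod 4} (hs : s ≠ 0) :
    mvS M N i s = mvS M N i' s' → i = i' ∧ s = s' := by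
  intro h
  have h1 : (Pi.single i s : Fin M → ZMod 4 × ZMod 4) = Pi.single i' s' :=
    congrArg Prod.fst h
  exact single_inj hs h1

lemma mvK_eq_iff {j j' : Fin N} {δ δ' : ZMod 4} (hδ : δ ≠ 0) :
    mvK M N j δ = mvK M N j' δ' → j = j' ∧ δ = δ' := by
  intro h
  have h2 : (Pi.single j δ : Fin N → ZMod 4) = Pi.single j' δ' :=
    congrArg Prod.snd h
  exact single_inj hδ h2

lemma mvS_ne_mvK {i : Fin M} {s : ZMod 4 × ZMod 4} {j : Fin N} {δ : ZMod 4} (hs : s ≠ 0) :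
    mvS M N i s ≠ mvK M N j δ := by
  intro h
  have h1 : (Pi.single i s : Fin M → ZMod 4 × ZMod 4) = 0 := congrArg Prod.fst h
  have := congrFun h1 i
  rw [Pi.single_eq_same] at this
  exact hs this

lemma mvS_ne_mvK' {i : Fin m} {s : ZMod 4 × ZMod 4} {j : Fin n} {δ : ZMod 4} (hs : s ≠ 0) :
    mvS m n i s ≠ mvK m n j δ := mvS_ne_mvK hs

lemma move_fiber_empty (d : DoobVertex m n) (hd : ¬ isMove m n d) :
    {e : DoobVertex M N | isMove M N e ∧ psiFun P Q e = d} = ∅ := by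
  ext e
  simp only [Set.mem_setOf_eq, Set.mem_empty_iff_false, iff_false, not_and]
  intro he hpe
  exact hd (hpe ▸ move_shape e he)

lemma move_fiber_count (hS : ∀ t, (fbS P t).card = k)
    (hX : ∀ t, 2 * (fbX P t).card + (fbQ Q t).card = k)
    (d : DoobVertex m n) (hd : isMove m n d) :
    {e : DoobVertex M N | isMove M N e ∧ psiFun P Q e = d}.ncard = k := by
  classical
  rcases hd with ⟨t, μ, hμ, rfl⟩ | ⟨t, δ, hδ, rfl⟩
  · -- d = mvS m n t μ
    have hμ0 : μ ≠ 0 := (csF_facts _ hμ).2.1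
    have hset : {e : DoobVertex M N | isMove M N e ∧ psiFun P Q e = mvS m n t μ}
        = ↑((fbS P t).image fun i => mvS M N i μ) := by
      ext e
      simp only [Set.mem_setOf_eq, Finset.coe_image, Set.mem_image, Finset.mem_coe]
      constructor
      · rintro ⟨hmv, hpe⟩
        rcases hmv with ⟨i, s, hs, rfl⟩ | ⟨j, δ, hδ, rfl⟩
        · rcases hPi : P i with t' | t'
          · rw [psi_mvS_inl hPi] at hpe
            obtain ⟨ht, hsμ⟩ := mvS_eq_iff (csF_facts _ hs).2.1 hpe
            subst ht; subst hsμ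
            exact ⟨i, by simp [fbS, hPi], rfl⟩
          · rw [psi_mvS_inr hPi] at hpe
            exact absurd hpe.symm (mvS_ne_mvK' hμ0)
        · rw [psi_mvK] at hpe
          exact absurd hpe.symm (mvS_ne_mvK' hμ0)
      · rintro ⟨i, hi, rfl⟩
        simp only [fbS, Finset.mem_filter, Finset.mem_univ, true_and] at hi
        exact ⟨Or.inl ⟨i, μ, hμ, rfl⟩, psi_mvS_inl hi μ⟩
    rw [hset, Set.ncard_coe_finset, Finset.card_image_of_injOn, hS t]
    intro i _ i' _ h
    exact (mvS_eq_iff hμ0 h).1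
  · -- d = mvK m n t δ
    have hset : {e : DoobVertex M N | isMove M N e ∧ psiFun P Q e = mvK m n t δ}
        = ↑((((fbX P t) ×ˢ (csF.filter fun s => φ4 s = δ)).image fun p => mvS M N p.1 p.2)
            ∪ ((fbQ Q t).image fun j => mvK M N j δ)) := by
      ext e
      simp only [Set.mem_setOf_eq, Finset.coe_union, Set.mem_union, Finset.mem_coe,
        Finset.mem_image, Finset.mem_product, Finset.mem_filter,
        Finset.mem_univ, true_and, fbX, fbQ]
      constructor
      · rintro ⟨hmv, hpe⟩
        rcases hmv with ⟨i, s, hs, rfl⟩ | ⟨j, δ', hδ', rfl⟩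
        · rcases hPi : P i with t' | t'
          · rw [psi_mvS_inl hPi] at hpe
            exact absurd hpe (mvS_ne_mvK' (csF_facts _ hs).2.1)
          · rw [psi_mvS_inr hPi] at hpe
            obtain ⟨ht, hφ⟩ := mvK_eq_iff (csF_facts _ hs).2.2 hpe
            subst ht
            exact Or.inl ⟨(i, s), ⟨hPi, hs, hφ⟩, rfl⟩
        · rw [psi_mvK] at hpe
          obtain ⟨ht, hδδ⟩ := mvK_eq_iff hδ' hpe
          subst hδδ
          exact Or.inr ⟨j, ht, rfl⟩
      · rintro (⟨⟨i, s⟩, ⟨hPi, hs, hφ⟩, rfl⟩ | ⟨j, hj, rfl⟩)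
        · exact ⟨Or.inl ⟨i, s, hs, rfl⟩, by rw [psi_mvS_inr hPi, hφ]⟩
        · exact ⟨Or.inr ⟨j, δ, hδ, rfl⟩, by rw [psi_mvK, hj]⟩
    rw [hset, Set.ncard_coe_finset]
    rw [Finset.card_union_of_disjoint]
    · rw [Finset.card_image_of_injOn, Finset.card_image_of_injOn, Finset.card_product,
        count2 δ hδ]
      · have := hX t
        omega
      · intro j _ j' _ h
        exact (mvK_eq_iff hδ h).1
      · rintro ⟨i, s⟩ hp ⟨i', s'⟩ hp' h
        simp only [Finset.mem_coe, Finset.mem_product, Finset.mem_filter] at hp hp'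
        have hs0 : s ≠ 0 := (csF_facts _ hp.2.1).2.1
        obtain ⟨h1, h2⟩ := mvS_eq_iff hs0 h
        exact Prod.ext h1 h2
    · rw [Finset.disjoint_left]
      rintro e he1 he2
      simp only [Finset.mem_image, Finset.mem_product, Finset.mem_filter] at he1 he2
      obtain ⟨⟨i, s⟩, hp, rfl⟩ := he1
      obtain ⟨j, hj, hne⟩ := he2
      exact mvS_ne_mvK (csF_facts _ hp.2.1).2.1 hne.symm

lemma cover_count (hS : ∀ t, (fbS P t).card = k)
    (hX : ∀ t, 2 * (fbX P t).card + (fbQ Q t).card = k)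
    (x : DoobVertex M N) (w : DoobVertex m n) :
    ((doobGraph m n).Adj (psiFun P Q x) w →
      {y | (doobGraph M N).Adj x y ∧ psiFun P Q y = w}.ncard = k) ∧
    (¬ (doobGraph m n).Adj (psiFun P Q x) w →
      {y | (doobGraph M N).Adj x y ∧ psiFun P Q y = w}.ncard = 0) := by
  have himg : {y | (doobGraph M N).Adj x y ∧ psiFun P Q y = w}
      = (fun e => x - e) '' {e | isMove M N e ∧ psiFun P Q e = psiFun P Q x - w} := by
    ext y
    simp only [Set.mem_setOf_eq, Set.mem_image]
    constructor
    · rintro ⟨hadj, hw⟩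
      refine ⟨x - y, ⟨(doob_adj x y).1 hadj, ?_⟩, sub_sub_cancel x y⟩
      rw [psiFun_sub, hw]
    · rintro ⟨e, ⟨hmv, hpe⟩, rfl⟩
      constructor
      · rw [doob_adj, sub_sub_cancel]
        exact hmv
      · rw [psiFun_sub, hpe]
        exact sub_sub_cancel _ _
  have hcard : {y | (doobGraph M N).Adj x y ∧ psiFun P Q y = w}.ncard
      = {e : DoobVertex M N | isMove M N e ∧ psiFun P Q e = psiFun P Q x - w}.ncard := by
    rw [himg, Set.ncard_image_of_injective _ sub_right_injective]
  constructor
  · intro hadj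
    rw [hcard]
    exact move_fiber_count hS hX _ ((doob_adj _ _).1 hadj)
  · intro hadj
    rw [hcard, move_fiber_empty _ (fun hmv => hadj ((doob_adj _ _).2 hmv))]
    exact Set.ncard_empty _

lemma psi_surj (hk : 0 < k) (hS : ∀ t, (fbS P t).card = k)
    (hX : ∀ t, 2 * (fbX P t).card + (fbQ Q t).card = k) :
    Function.Surjective (psiFun P Q) := by
  rintro ⟨u, v⟩
  have h1 : ∀ t : Fin m, ∃ i, P i = Sum.inl t := by
    intro t
    have : (fbS P t).Nonempty := Finset.card_pos.mp (by rw [hS t]; exact hk)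
    obtain ⟨i, hi⟩ := this
    simp only [fbS, Finset.mem_filter, Finset.mem_univ, true_and] at hi
    exact ⟨i, hi⟩
  have h2 : ∀ t : Fin n, ∃ e : DoobVertex M N, psiFun P Q e = (0, Pi.single t (v t)) := by
    intro t
    rcases (fbX P t).eq_empty_or_nonempty with hx | hx
    · have : (fbQ Q t).Nonempty := by
        refine Finset.card_pos.mp ?_
        have := hX t
        rw [hx] at this
        simp only [Finset.card_empty, Nat.mul_zero, Nat.zero_add] at this
        omega
      obtain ⟨j, hj⟩ := this
      simp only [fbQ, Finset.mem_filter, Finset.mem_univ, true_and] at hj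
      refine ⟨mvK M N j (v t), ?_⟩
      rw [psi_mvK, hj]
      rfl
    · obtain ⟨i, hi⟩ := hx
      simp only [fbX, Finset.mem_filter, Finset.mem_univ, true_and] at hi
      refine ⟨mvS M N i (0, v t), ?_⟩
      rw [psi_mvS_inr hi]
      have : φ4 (0, v t) = v t := by simp [φ4]
      rw [this]
      rfl
  choose c1 hc1 using h1
  choose c2 hc2 using h2
  refine ⟨(∑ t : Fin m, mvS M N (c1 t) (u t)) + ∑ t : Fin n, c2 t, ?_⟩
  have hsplit : psiFun P Q ((∑ t : Fin m, mvS M N (c1 t) (u t)) + ∑ t : Fin n, c2 t)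
      = (∑ t : Fin m, psiFun P Q (mvS M N (c1 t) (u t))) + ∑ t : Fin n, psiFun P Q (c2 t) := by
    have h := map_add (psi P Q) (∑ t : Fin m, mvS M N (c1 t) (u t)) (∑ t : Fin n, c2 t)
    have h1 := map_sum (psi P Q) (fun t => mvS M N (c1 t) (u t)) Finset.univ
    have h2 := map_sum (psi P Q) c2 Finset.univ
    exact h.trans (by rw [h1, h2]; rfl)
  rw [hsplit]
  have e1 : (∑ t : Fin m, psiFun P Q (mvS M N (c1 t) (u t)))
      = ((u, 0) : DoobVertex m n) := by
    rw [Finset.sum_congr rfl (fun t _ => psi_mvS_inl (hc1 t) (u t))]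
    refine Prod.ext ?_ ?_
    · rw [Prod.fst_sum]
      show (∑ t : Fin m, (Pi.single t (u t) : Fin m → ZMod 4 × ZMod 4)) = u
      exact Finset.univ_sum_single u
    · rw [Prod.snd_sum]
      show (∑ _t : Fin m, (0 : Fin n → ZMod 4)) = 0
      simp
  have e2 : (∑ t : Fin n, psiFun P Q (c2 t)) = ((0, v) : DoobVertex m n) := by
    rw [Finset.sum_congr rfl (fun t _ => hc2 t)]
    refine Prod.ext ?_ ?_
    · rw [Prod.fst_sum]
      show (∑ _t : Fin n, (0 : Fin m → ZMod 4 × ZMod 4)) = 0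
      simp
    · rw [Prod.snd_sum]
      show (∑ t : Fin n, (Pi.single t (v t) : Fin n → ZMod 4)) = v
      exact Finset.univ_sum_single v
  rw [e1, e2, Prod.mk_add_mk, add_zero, zero_add]

end DoobAux

namespace DoobAux

lemma ncard_setOf {α : Type*} [Fintype α] (p : α → Prop) [DecidablePred p] :
    {x | p x}.ncard = (Finset.univ.filter p).card := by
  rw [← Set.ncard_coe_finset]
  congr 1
  ext x
  simp

lemma transfer {V W C : Type*} [Fintype V] [Fintype W] (G : SimpleGraph V)
    (H : SimpleGraph W) (ψ : V → W) (k : ℕ) (hsurj : Function.Surjective ψ)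
    (hcov : ∀ x w, (H.Adj (ψ x) w → {y | G.Adj x y ∧ ψ y = w}.ncard = k) ∧
      (¬ H.Adj (ψ x) w → {y | G.Adj x y ∧ ψ y = w}.ncard = 0))
    {g : W → C} {S : Matrix C C ℕ} (hg : IsPerfectColoring H g S) :
    IsPerfectColoring G (g ∘ ψ) (k • S) := by
  classical
  obtain ⟨hgs, hgc⟩ := hg
  refine ⟨hgs.comp hsurj, fun x c => ?_⟩
  have hA : {y | G.Adj x y ∧ (g ∘ ψ) y = c}
      = ↑(Finset.univ.filter fun y => G.Adj x y ∧ g (ψ y) = c) := by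
    ext y; simp [Function.comp]
  rw [hA, Set.ncard_coe_finset]
  rw [Finset.card_eq_sum_card_fiberwise (f := ψ)
    (t := Finset.univ.filter fun w => g w = c)
    (fun y hy => by simp only [Finset.coe_filter, Set.mem_setOf_eq, Finset.mem_filter, Finset.mem_univ, true_and] at hy ⊢
                    exact hy.2)]
  have hterm : ∀ w ∈ Finset.univ.filter fun w => g w = c,
      ((Finset.univ.filter fun y => G.Adj x y ∧ g (ψ y) = c).filter fun y => ψ y = w).card
      = k * (if H.Adj (ψ x) w then 1 else 0) := by
    intro w hw
    simp only [Finset.mem_filter, Finset.mem_univ, true_and] at hw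
    have hfe : ((Finset.univ.filter fun y => G.Adj x y ∧ g (ψ y) = c).filter
        fun y => ψ y = w) = Finset.univ.filter fun y => G.Adj x y ∧ ψ y = w := by
      ext y
      simp only [Finset.mem_filter, Finset.mem_univ, true_and]
      constructor
      · rintro ⟨⟨h1, _⟩, h3⟩; exact ⟨h1, h3⟩
      · rintro ⟨h1, h3⟩; exact ⟨⟨h1, h3 ▸ hw⟩, h3⟩
    rw [hfe]
    have hnc : {y | G.Adj x y ∧ ψ y = w}.ncard
        = (Finset.univ.filter fun y => G.Adj x y ∧ ψ y = w).card :=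
      ncard_setOf _
    by_cases hadj : H.Adj (ψ x) w
    · rw [if_pos hadj, mul_one, ← hnc]
      exact (hcov x w).1 hadj
    · rw [if_neg hadj, mul_zero, ← hnc]
      exact (hcov x w).2 hadj
  rw [Finset.sum_congr rfl hterm, ← Finset.mul_sum]
  have hsum : (∑ w ∈ Finset.univ.filter fun w => g w = c,
      (if H.Adj (ψ x) w then 1 else 0))
      = (Finset.univ.filter fun w => H.Adj (ψ x) w ∧ g w = c).card := by
    rw [Finset.card_filter]
    rw [Finset.sum_filter]
    apply Finset.sum_congr rfl
    intro w _
    by_cases h1 : g w = c <;> by_cases h2 : H.Adj (ψ x) w <;> simp [h1, h2]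
  rw [hsum]
  have := hgc (ψ x) c
  rw [ncard_setOf] at this
  rw [this]
  simp [Matrix.smul_apply]

def sigmaFstFiber {ι : Type*} (β : ι → Type*) (t : ι) :
    {p : Σ i, β i // p.1 = t} ≃ β t where
  toFun p := p.2 ▸ p.1.2
  invFun b := ⟨⟨t, b⟩, rfl⟩
  left_inv := by rintro ⟨⟨a, b⟩, rfl⟩; rfl
  right_inv b := rfl

lemma exists_fiber_fun {σ : Type*} [Fintype σ] [DecidableEq σ] (sz : σ → ℕ) (D : ℕ)
    (hD : D = ∑ t, sz t) :
    ∃ f : Fin D → σ, ∀ t, (Finset.univ.filter fun i => f i = t).card = sz t := by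
  have hcard : Fintype.card (Fin D) = Fintype.card (Σ t, Fin (sz t)) := by
    simp [Fintype.card_sigma, hD]
  let e : Fin D ≃ Σ t, Fin (sz t) := Fintype.equivOfCardEq hcard
  refine ⟨fun i => (e i).1, fun t => ?_⟩
  rw [← Fintype.card_subtype]
  rw [← Fintype.card_fin (sz t)]
  apply Fintype.card_congr
  exact (e.subtypeEquiv fun i => Iff.rfl).trans (sigmaFstFiber _ t)

lemma exists_caps (n c : ℕ) : ∀ m' : ℕ, m' ≤ n * c →
    ∃ a : Fin n → ℕ, (∀ t, a t ≤ c) ∧ ∑ t, a t = m' := by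
  induction n with
  | zero =>
    intro m' h
    simp only [Nat.zero_mul, Nat.le_zero] at h
    exact ⟨fun t => 0, fun t => Nat.zero_le c, by simp [h]⟩
  | succ n ih =>
    intro m' h
    have hrest : m' - min c m' ≤ n * c := by
      rcases le_total c m' with hc | hc
      · rw [min_eq_left hc]
        have : (n + 1) * c = n * c + c := by ring
        omega
      · rw [min_eq_right hc]
        omega
    obtain ⟨a, ha, hsum⟩ := ih (m' - min c m') hrest
    refine ⟨Fin.cons (min c m') a, ?_, ?_⟩
    · intro t
      refine Fin.cases ?_ ?_ t
      · exact min_le_left _ _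
      · intro t'
        exact ha t'
    · rw [Fin.sum_cons, hsum]
      omega

end DoobAux

theorem stmt_9 (m n k₀ : ℕ) (S : Matrix (Fin k₀) (Fin k₀) ℕ)
    (hex : ∃ g : DoobVertex m n → Fin k₀,
      IsPerfectColoring (doobGraph m n) g S) :
    (∀ k m' n' : ℕ, 0 < k → Even k → 2 * m' + n' = k * n →
      ∃ f : DoobVertex (m * k + m') n' → Fin k₀,
        IsPerfectColoring (doobGraph (m * k + m') n') f (k • S)) ∧
    (∀ k m' n' : ℕ, 0 < k → Odd k → 2 * m' + n' = k * n → n ≤ n' →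
      ∃ f : DoobVertex (m * k + m') n' → Fin k₀,
        IsPerfectColoring (doobGraph (m * k + m') n') f (k • S)) := by
  obtain ⟨g, hg⟩ := hex
  have main : ∀ k m' n' : ℕ, 0 < k → m' ≤ n * (k / 2) → 2 * m' + n' = k * n →
      ∃ f : DoobVertex (m * k + m') n' → Fin k₀,
        IsPerfectColoring (doobGraph (m * k + m') n') f (k • S) := by
    intro k m' n' hk hm hsum
    obtain ⟨a, ha, hasum⟩ := DoobAux.exists_caps n (k / 2) m' hm
    have ha2 : ∀ t, 2 * a t ≤ k := fun t => by have := ha t; omega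
    have hD1 : m * k + m' = ∑ x : Fin m ⊕ Fin n, Sum.elim (fun _ : Fin m => k) a x := by
      rw [Fintype.sum_sum_type]
      simp only [Sum.elim_inl, Sum.elim_inr]
      rw [Finset.sum_const, Finset.card_univ, Fintype.card_fin, smul_eq_mul, hasum]
    obtain ⟨P, hP⟩ := DoobAux.exists_fiber_fun (Sum.elim (fun _ : Fin m => k) a)
      (m * k + m') hD1
    have hD2 : n' = ∑ t : Fin n, (k - 2 * a t) := by
      have hterm : ∀ t ∈ Finset.univ, (k - 2 * a t) + 2 * a t = k := by
        intro t _; have := ha2 t; omega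
      have h1 : (∑ t : Fin n, ((k - 2 * a t) + 2 * a t)) = n * k := by
        rw [Finset.sum_congr rfl hterm, Finset.sum_const, Finset.card_univ,
          Fintype.card_fin, smul_eq_mul]
      rw [Finset.sum_add_distrib, ← Finset.mul_sum, hasum] at h1
      have hkn : k * n = n * k := mul_comm k n
      omega
    obtain ⟨Q, hQ⟩ := DoobAux.exists_fiber_fun (fun t : Fin n => k - 2 * a t) n' hD2
    have hSfib : ∀ t, (DoobAux.fbS P t).card = k := fun t => hP (Sum.inl t)
    have hXfib : ∀ t, 2 * (DoobAux.fbX P t).card + (DoobAux.fbQ Q t).card = k := by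
      intro t
      have h1 : (DoobAux.fbX P t).card = a t := hP (Sum.inr t)
      have h2 : (DoobAux.fbQ Q t).card = k - 2 * a t := hQ t
      have := ha2 t
      omega
    refine ⟨g ∘ DoobAux.psiFun P Q, ?_⟩
    exact DoobAux.transfer _ _ _ k (DoobAux.psi_surj hk hSfib hXfib)
      (fun x w => DoobAux.cover_count hSfib hXfib x w) hg
  constructor
  · intro k m' n' hk hke hsum
    obtain ⟨c, hc⟩ := hke
    refine main k m' n' hk ?_ hsum
    have hkn : k * n = 2 * (c * n) := by rw [hc]; ring
    have hm : m' ≤ c * n := by omega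
    have hc2 : k / 2 = c := by omega
    rw [hc2]
    exact hm.trans_eq (mul_comm c n)
  · intro k m' n' hk hko hsum hnn
    obtain ⟨c, hc⟩ := hko
    refine main k m' n' hk ?_ hsum
    have hkn : k * n = 2 * (c * n) + n := by rw [hc]; ring
    have hm : m' ≤ c * n := by omega
    have hc2 : k / 2 = c := by omega
    rw [hc2]
    exact hm.trans_eq (mul_comm c n)
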